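/- If a dynamic coherent risk measure ρ = (ρ_t)_{t∈𝕋} is strongly time-consistent, then for any collection of numéraires V = (v^0,…,v^d) with v^0 ≡ 1, ρ is predictably V-time-consistent. Moreover, in the case d = 0 with V ≡ 1, strong time-consistency and predictable V-time-consistency coincide. -/

import Mathlib

/-!
Statement 9: strong time-consistency of a dynamic coherent risk measure implies
predictable `V`-time-consistency for any collection of numéraires `V` with `v⁰ ≡ 1`;
and in the case `d = 0`, `V ≡ 1`, the two notions coincide.
-/

open MeasureTheory Filter Set

variable {Ω : Type*} {mΩ : MeasurableSpace Ω}

/-- `v` is a numéraire: essentially bounded, a.s. strictly positive, with `1/v`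
essentially bounded. -/
def IsNumeraire (μ : Measure Ω) (v : Ω → ℝ) : Prop :=
  MemLp v ⊤ μ ∧ (∀ᵐ ω ∂μ, 0 < v ω) ∧ MemLp (fun ω => (v ω)⁻¹) ⊤ μ

/-- `ρ = (ρ_t)_{t ≤ T}` is a dynamic coherent risk measure: each `ρ_t` maps `L∞` into
`F_t`-measurable elements of `L∞`, and the whole family is represented by a single
nonempty convex set `𝒬` of `P`-absolutely continuous probability measures (identified
with their densities) via `ρ_t(X) = esssup_{Q∈𝒬} E_Q[X|F_t]`; the essential supremum is
expressed through the Bayes formula `E_Q[X|F_t]·E[dQ/dP|F_t] = E[(dQ/dP)·X|F_t]`. -/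
def IsDynCoherent (μ : Measure Ω) (ℱ : Filtration ℕ mΩ) (T : ℕ)
    (ρ : ℕ → (Ω → ℝ) → Ω → ℝ) : Prop :=
  ∃ 𝒬 : Set (Ω → ℝ),
    𝒬.Nonempty ∧ Convex ℝ 𝒬 ∧
    (∀ Z ∈ 𝒬, Integrable Z μ ∧ 0 ≤ᵐ[μ] Z ∧ ∫ ω, Z ω ∂μ = 1) ∧
    (∀ t ≤ T, ∀ X : Ω → ℝ, MemLp X ⊤ μ →
      (StronglyMeasurable[ℱ t] (ρ t X) ∧ MemLp (ρ t X) ⊤ μ) ∧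
      (∀ Z ∈ 𝒬,
        μ[fun ω => Z ω * X ω | ℱ t] ≤ᵐ[μ] fun ω => (μ[Z | ℱ t]) ω * ρ t X ω) ∧
      (∀ U : Ω → ℝ, StronglyMeasurable[ℱ t] U →
        (∀ Z ∈ 𝒬,
          μ[fun ω => Z ω * X ω | ℱ t] ≤ᵐ[μ] fun ω => (μ[Z | ℱ t]) ω * U ω) →
        ρ t X ≤ᵐ[μ] U))

/-- The time-`t` acceptance set `A_t = {X ∈ L∞ : ρ_t(X) ≤ 0}`. -/
def acceptanceSet (μ : Measure Ω) (ρ : ℕ → (Ω → ℝ) → Ω → ℝ) (t : ℕ) :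
    Set (Ω → ℝ) :=
  {X | MemLp X ⊤ μ ∧ ρ t X ≤ᵐ[μ] 0}

/-- `ρ` is predictably `V`-time-consistent: for all `X ∈ L∞` and `t < T`, `ρ_t(X)` is the
essential infimum of `{ρ_t(Y·V) : Y ∈ L∞(F_{t+1};ℝ^{d+1}), X − Y·V ∈ A_{t+1}}`. -/
def PredVTimeConsistent (μ : Measure Ω) (ℱ : Filtration ℕ mΩ) (T : ℕ) {d : ℕ}
    (V : Fin (d+1) → Ω → ℝ) (ρ : ℕ → (Ω → ℝ) → Ω → ℝ) : Prop :=
  ∀ t < T, ∀ X : Ω → ℝ, MemLp X ⊤ μ →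
    (∀ Y : Fin (d+1) → Ω → ℝ, (∀ i, MemLp (Y i) ⊤ μ) →
      (∀ i, StronglyMeasurable[ℱ (t+1)] (Y i)) →
      (fun ω => X ω - ∑ i, Y i ω * V i ω) ∈ acceptanceSet μ ρ (t+1) →
      ρ t X ≤ᵐ[μ] ρ t (fun ω => ∑ i, Y i ω * V i ω)) ∧
    (∀ L : Ω → ℝ,
      (∀ Y : Fin (d+1) → Ω → ℝ, (∀ i, MemLp (Y i) ⊤ μ) →
        (∀ i, StronglyMeasurable[ℱ (t+1)] (Y i)) →
        (fun ω => X ω - ∑ i, Y i ω * V i ω) ∈ acceptanceSet μ ρ (t+1) →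
        L ≤ᵐ[μ] ρ t (fun ω => ∑ i, Y i ω * V i ω)) →
      L ≤ᵐ[μ] ρ t X)

/-- `ρ` is strongly time-consistent: `ρ_t(X) = ρ_t(ρ_{t+1}(X))` for all `t ≤ T−1`. -/
def StronglyTimeConsistent (μ : Measure Ω) (T : ℕ)
    (ρ : ℕ → (Ω → ℝ) → Ω → ℝ) : Prop :=
  ∀ t < T, ∀ X : Ω → ℝ, MemLp X ⊤ μ → ρ t X =ᵐ[μ] ρ t (ρ (t+1) X)


section Helpers

variable {Ω : Type*} {mΩ : MeasurableSpace Ω} {μ : Measure Ω}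

open MeasureTheory Filter

lemma memℒp_top_bound' {f : Ω → ℝ} (hf : MemLp f ⊤ μ) :
    ∃ C : ℝ, ∀ᵐ ω ∂μ, ‖f ω‖ ≤ C := by
  refine ⟨(eLpNormEssSup f μ).toReal, ?_⟩
  have hfin : eLpNormEssSup f μ ≠ ⊤ := by
    have h2 := hf.2
    rwa [eLpNorm_exponent_top, lt_top_iff_ne_top] at h2
  filter_upwards [ae_le_eLpNormEssSup (f := f) (μ := μ)] with ω hω
  have h := ENNReal.toReal_mono hfin hω
  simpa using h

lemma integrable_mul_memTop' {Z X : Ω → ℝ} (hZ : Integrable Z μ)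
    (hX : MemLp X ⊤ μ) : Integrable (fun ω => Z ω * X ω) μ := by
  obtain ⟨C, hC⟩ := memℒp_top_bound' hX
  have h := hZ.bdd_mul hX.aestronglyMeasurable hC
  exact h.congr (Filter.Eventually.of_forall fun ω => mul_comm _ _)

lemma memTop_mul' {f g : Ω → ℝ} (hf : MemLp f ⊤ μ) (hg : MemLp g ⊤ μ) :
    MemLp (fun ω => f ω * g ω) ⊤ μ := by
  obtain ⟨Cf, hCf⟩ := memℒp_top_bound' hf
  obtain ⟨Cg, hCg⟩ := memℒp_top_bound' hg
  refine memLp_top_of_bound (hf.aestronglyMeasurable.mul hg.aestronglyMeasurable)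
    (|Cf| * |Cg|) ?_
  filter_upwards [hCf, hCg] with ω h1 h2
  rw [norm_mul]
  exact mul_le_mul (h1.trans (le_abs_self _)) (h2.trans (le_abs_self _))
    (norm_nonneg _) (abs_nonneg _)

end Helpers

/-- Strong time-consistency implies predictable `V`-time-consistency,
and for `d = 0`, `V ≡ 1` the two notions coincide. -/
theorem strongTC_implies_predVTC
    (μ : Measure Ω) [IsProbabilityMeasure μ] (ℱ : Filtration ℕ mΩ) (T d : ℕ)
    (ρ : ℕ → (Ω → ℝ) → Ω → ℝ)
    (hρ : IsDynCoherent μ ℱ T ρ)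
    (V : Fin (d+1) → Ω → ℝ) (hV : ∀ i, IsNumeraire μ (V i))
    (hV0 : V 0 = fun _ => 1) :
    (StronglyTimeConsistent μ T ρ → PredVTimeConsistent μ ℱ T V ρ) ∧
    (StronglyTimeConsistent μ T ρ ↔
      PredVTimeConsistent μ ℱ T (fun (_ : Fin 1) (_ : Ω) => (1 : ℝ)) ρ)  := by
  classical
  obtain ⟨𝒬, -, -, hQprop, hrep⟩ := hρ
  -- monotonicity
  have hmono : ∀ t ≤ T, ∀ X X' : Ω → ℝ, MemLp X ⊤ μ → MemLp X' ⊤ μ → X ≤ᵐ[μ] X' →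
      ρ t X ≤ᵐ[μ] ρ t X' := by
    intro t ht X X' hX hX' hle
    obtain ⟨-, -, hmin⟩ := hrep t ht X hX
    obtain ⟨⟨hSM', -⟩, hub', -⟩ := hrep t ht X' hX'
    refine hmin (ρ t X') hSM' ?_
    intro Z hZ
    obtain ⟨hZint, hZpos, -⟩ := hQprop Z hZ
    have h1 : (fun ω => Z ω * X ω) ≤ᵐ[μ] fun ω => Z ω * X' ω := by
      filter_upwards [hZpos, hle] with ω h0 h1
      exact mul_le_mul_of_nonneg_left h1 h0
    exact (condExp_mono (integrable_mul_memTop' hZint hX)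
      (integrable_mul_memTop' hZint hX') h1).trans (hub' Z hZ)
  -- subadditivity
  have hsub : ∀ t ≤ T, ∀ f g : Ω → ℝ, MemLp f ⊤ μ → MemLp g ⊤ μ →
      ρ t (fun ω => f ω + g ω) ≤ᵐ[μ] fun ω => ρ t f ω + ρ t g ω := by
    intro t ht f g hf hg
    have hfg : MemLp (fun ω => f ω + g ω) ⊤ μ := hf.add hg
    obtain ⟨-, -, hmin⟩ := hrep t ht _ hfg
    obtain ⟨⟨hSMf, -⟩, hubf, -⟩ := hrep t ht f hf
    obtain ⟨⟨hSMg, -⟩, hubg, -⟩ := hrep t ht g hg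
    refine hmin (fun ω => ρ t f ω + ρ t g ω) (hSMf.add hSMg) ?_
    intro Z hZ
    obtain ⟨hZint, -, -⟩ := hQprop Z hZ
    have hadd : μ[fun ω => Z ω * (f ω + g ω)|ℱ t] =ᵐ[μ]
        fun ω => (μ[fun ω => Z ω * f ω|ℱ t]) ω + (μ[fun ω => Z ω * g ω|ℱ t]) ω := by
      have heq : (fun ω => Z ω * (f ω + g ω))
          = (fun ω => Z ω * f ω) + fun ω => Z ω * g ω := by
        funext ω; simp [mul_add]
      rw [heq]
      exact condExp_add (integrable_mul_memTop' hZint hf) (integrable_mul_memTop' hZint hg) _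
    filter_upwards [hadd, hubf Z hZ, hubg Z hZ] with ω h1 h2 h3
    have h2' : (μ[fun ω => Z ω * f ω|ℱ t]) ω ≤ (μ[Z|ℱ t]) ω * ρ t f ω := h2
    have h3' : (μ[fun ω => Z ω * g ω|ℱ t]) ω ≤ (μ[Z|ℱ t]) ω * ρ t g ω := h3
    have hgoal : (μ[fun ω => Z ω * (f ω + g ω)|ℱ t]) ω
        = (μ[fun ω => Z ω * f ω|ℱ t]) ω + (μ[fun ω => Z ω * g ω|ℱ t]) ω := h1
    show (μ[fun ω => Z ω * (f ω + g ω)|ℱ t]) ω ≤ (μ[Z|ℱ t]) ω * (ρ t f ω + ρ t g ω)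
    rw [hgoal, mul_add]
    exact add_le_add h2' h3'
  -- translation property
  have htrans : ∀ t ≤ T, ∀ X W : Ω → ℝ, MemLp X ⊤ μ → MemLp W ⊤ μ →
      StronglyMeasurable[ℱ t] W →
      ρ t (fun ω => X ω - W ω) ≤ᵐ[μ] fun ω => ρ t X ω - W ω := by
    intro t ht X W hX hW hWsm
    have hXW : MemLp (fun ω => X ω - W ω) ⊤ μ := hX.sub hW
    obtain ⟨-, -, hmin⟩ := hrep t ht _ hXW
    obtain ⟨⟨hSMX, -⟩, hubX, -⟩ := hrep t ht X hX
    refine hmin (fun ω => ρ t X ω - W ω) (hSMX.sub hWsm) ?_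
    intro Z hZ
    obtain ⟨hZint, -, -⟩ := hQprop Z hZ
    have hZW : Integrable (fun ω => Z ω * W ω) μ := integrable_mul_memTop' hZint hW
    have hZX : Integrable (fun ω => Z ω * X ω) μ := integrable_mul_memTop' hZint hX
    have hWZ : Integrable (W * Z) μ :=
      hZW.congr (Filter.Eventually.of_forall fun ω => mul_comm _ _)
    have hsubc : μ[fun ω => Z ω * (X ω - W ω)|ℱ t] =ᵐ[μ]
        fun ω => (μ[fun ω => Z ω * X ω|ℱ t]) ω - (μ[fun ω => Z ω * W ω|ℱ t]) ω := by
      have heq : (fun ω => Z ω * (X ω - W ω))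
          = (fun ω => Z ω * X ω) - fun ω => Z ω * W ω := by
        funext ω; simp [mul_sub]
      rw [heq]
      exact condExp_sub hZX hZW _
    have hpull : μ[fun ω => Z ω * W ω|ℱ t] =ᵐ[μ] fun ω => W ω * (μ[Z|ℱ t]) ω := by
      have heq : (fun ω => Z ω * W ω) = W * Z := by funext ω; simp [mul_comm]
      rw [heq]
      exact condExp_mul_of_stronglyMeasurable_left hWsm hWZ hZint
    filter_upwards [hsubc, hpull, hubX Z hZ] with ω h1 h2 h3
    have h1' : (μ[fun ω => Z ω * (X ω - W ω)|ℱ t]) ω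
        = (μ[fun ω => Z ω * X ω|ℱ t]) ω - (μ[fun ω => Z ω * W ω|ℱ t]) ω := h1
    have h2' : (μ[fun ω => Z ω * W ω|ℱ t]) ω = W ω * (μ[Z|ℱ t]) ω := h2
    have h3' : (μ[fun ω => Z ω * X ω|ℱ t]) ω ≤ (μ[Z|ℱ t]) ω * ρ t X ω := h3
    show (μ[fun ω => Z ω * (X ω - W ω)|ℱ t]) ω ≤ (μ[Z|ℱ t]) ω * (ρ t X ω - W ω)
    rw [h1', h2']
    nlinarith [h3']
  -- reverse translation
  have htrans' : ∀ t ≤ T, ∀ X W : Ω → ℝ, MemLp X ⊤ μ → MemLp W ⊤ μ →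
      StronglyMeasurable[ℱ t] W →
      ρ t X ≤ᵐ[μ] fun ω => ρ t (fun ω => X ω - W ω) ω + W ω := by
    intro t ht X W hX hW hWsm
    have h := htrans t ht (fun ω => X ω - W ω) (fun ω => -W ω) (hX.sub hW) hW.neg hWsm.neg
    have heq : (fun ω => (fun ω => X ω - W ω) ω - (fun ω => -W ω) ω) = X := by
      funext ω; simp
    rw [heq] at h
    filter_upwards [h] with ω h1
    have h1' : ρ t X ω ≤ ρ t (fun ω => X ω - W ω) ω - (fun ω => -W ω) ω := h1
    simp only [neg_neg, sub_neg_eq_add] at h1'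
    exact h1'
  -- main implication, general collection of numéraires with v⁰ ≡ 1
  have hmain : ∀ (d' : ℕ) (V' : Fin (d'+1) → Ω → ℝ), (∀ i, MemLp (V' i) ⊤ μ) →
      V' 0 = (fun _ => (1:ℝ)) → StronglyTimeConsistent μ T ρ →
      PredVTimeConsistent μ ℱ T V' ρ := by
    intro d' V' hV' hV0' hstc
    intro t ht X hX
    have ht1 : t + 1 ≤ T := ht
    have htT : t ≤ T := le_of_lt ht
    obtain ⟨⟨hRsm, hRmem⟩, -, -⟩ := hrep (t+1) ht1 X hX
    constructor
    · -- lower bound over replicating strategies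
      intro Y hYmem hYsm hacc
      set W : Ω → ℝ := fun ω => ∑ i, Y i ω * V' i ω with hWdef
      have hWmem : MemLp W ⊤ μ :=
        memLp_finset_sum Finset.univ fun i _ => memTop_mul' (hYmem i) (hV' i)
      obtain ⟨hXWmem, hXWacc⟩ := hacc
      obtain ⟨⟨-, hWρmem⟩, -, -⟩ := hrep (t+1) ht1 W hWmem
      have h1 : ρ (t+1) X ≤ᵐ[μ] ρ (t+1) W := by
        have hs := hsub (t+1) ht1 W (fun ω => X ω - W ω) hWmem hXWmem
        have heq : (fun ω => W ω + (fun ω => X ω - W ω) ω) = X := by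
          funext ω; simp
        rw [heq] at hs
        filter_upwards [hs, hXWacc] with ω hω h0
        have hω' : ρ (t+1) X ω ≤ ρ (t+1) W ω + ρ (t+1) (fun ω => X ω - W ω) ω := hω
        have h0' : ρ (t+1) (fun ω => X ω - W ω) ω ≤ 0 := h0
        linarith
      have h2 := hmono t htT _ _ hRmem hWρmem h1
      have e1 := hstc t ht X hX
      have e2 := hstc t ht W hWmem
      filter_upwards [e1, e2, h2] with ω a b c
      rw [a, b]
      exact c
    · -- ρ_t X is a lower bound, via the strategy Y = (ρ_{t+1} X, 0, …, 0)
      intro L hL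
      set Y : Fin (d'+1) → Ω → ℝ := fun i ω => if i = 0 then ρ (t+1) X ω else 0 with hYdef
      have hYmem : ∀ i, MemLp (Y i) ⊤ μ := by
        intro i
        by_cases hi : i = 0
        · simpa [hYdef, hi] using hRmem
        · simpa [hYdef, hi] using memLp_const (0:ℝ)
      have hYsm : ∀ i, StronglyMeasurable[ℱ (t+1)] (Y i) := by
        intro i
        by_cases hi : i = 0
        · simpa [hYdef, hi] using hRsm
        · simpa [hYdef, hi] using
            (stronglyMeasurable_const : StronglyMeasurable[ℱ (t+1)] fun _ : Ω => (0:ℝ))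
      have hsumeq : (fun ω => ∑ i, Y i ω * V' i ω) = ρ (t+1) X := by
        funext ω
        rw [Finset.sum_eq_single (0 : Fin (d'+1))]
        · simp [hYdef, hV0']
        · intro b _ hb; simp [hYdef, hb]
        · intro h; exact absurd (Finset.mem_univ _) h
      have hacc : (fun ω => X ω - ∑ i, Y i ω * V' i ω) ∈ acceptanceSet μ ρ (t+1) := by
        have heq2 : (fun ω => X ω - ∑ i, Y i ω * V' i ω)
            = fun ω => X ω - ρ (t+1) X ω := by
          funext ω
          rw [show (∑ i, Y i ω * V' i ω) = ρ (t+1) X ω from congrFun hsumeq ω]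
        rw [heq2]
        refine ⟨hX.sub hRmem, ?_⟩
        have h := htrans (t+1) ht1 X (ρ (t+1) X) hX hRmem hRsm
        filter_upwards [h] with ω hω
        have hω' : ρ (t+1) (fun ω => X ω - ρ (t+1) X ω) ω
            ≤ ρ (t+1) X ω - ρ (t+1) X ω := hω
        simpa using hω'
      have hLe := hL Y hYmem hYsm hacc
      rw [hsumeq] at hLe
      have e1 := hstc t ht X hX
      filter_upwards [hLe, e1] with ω h1 h2
      rw [h2]
      exact h1
  refine ⟨hmain d V (fun i => (hV i).1) hV0,
    ⟨fun hstc => hmain 0 _ (fun _ => memLp_const 1) rfl hstc, fun hpred => ?_⟩⟩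
  -- converse for d = 0, V ≡ 1
  intro t ht X hX
  have ht1 : t + 1 ≤ T := ht
  have htT : t ≤ T := le_of_lt ht
  obtain ⟨⟨hRsm, hRmem⟩, -, -⟩ := hrep (t+1) ht1 X hX
  obtain ⟨hpart1, hpart2⟩ := hpred t ht X hX
  -- ρ_t X ≤ ρ_t (ρ_{t+1} X)
  have hsumeq : (fun ω => ∑ i : Fin 1,
      (fun _ : Fin 1 => ρ (t+1) X) i ω * (fun (_ : Fin 1) (_ : Ω) => (1:ℝ)) i ω)
      = ρ (t+1) X := by
    funext ω; simp
  have hacc : (fun ω => X ω - ∑ i : Fin 1,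
      (fun _ : Fin 1 => ρ (t+1) X) i ω * (fun (_ : Fin 1) (_ : Ω) => (1:ℝ)) i ω)
      ∈ acceptanceSet μ ρ (t+1) := by
    have heq2 : (fun ω => X ω - ∑ i : Fin 1,
        (fun _ : Fin 1 => ρ (t+1) X) i ω * (fun (_ : Fin 1) (_ : Ω) => (1:ℝ)) i ω)
        = fun ω => X ω - ρ (t+1) X ω := by
      funext ω
      rw [show (∑ i : Fin 1,
        (fun _ : Fin 1 => ρ (t+1) X) i ω * (fun (_ : Fin 1) (_ : Ω) => (1:ℝ)) i ω)
        = ρ (t+1) X ω from congrFun hsumeq ω]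
    rw [heq2]
    refine ⟨hX.sub hRmem, ?_⟩
    have h := htrans (t+1) ht1 X (ρ (t+1) X) hX hRmem hRsm
    filter_upwards [h] with ω hω
    have hω' : ρ (t+1) (fun ω => X ω - ρ (t+1) X ω) ω
        ≤ ρ (t+1) X ω - ρ (t+1) X ω := hω
    simpa using hω'
  have hle1 := hpart1 (fun _ => ρ (t+1) X) (fun _ => hRmem) (fun _ => hRsm) hacc
  rw [hsumeq] at hle1
  -- ρ_t (ρ_{t+1} X) ≤ ρ_t X
  have hle2 : ρ t (ρ (t+1) X) ≤ᵐ[μ] ρ t X := by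
    refine hpart2 (ρ t (ρ (t+1) X)) ?_
    intro Y hYmem hYsm haccY
    have hsum2 : (fun ω => ∑ i : Fin 1, Y i ω * (fun (_ : Fin 1) (_ : Ω) => (1:ℝ)) i ω)
        = Y 0 := by
      funext ω; simp
    have heqY : (fun ω => X ω - ∑ i : Fin 1,
        Y i ω * (fun (_ : Fin 1) (_ : Ω) => (1:ℝ)) i ω) = fun ω => X ω - Y 0 ω := by
      funext ω
      rw [show (∑ i : Fin 1, Y i ω * (fun (_ : Fin 1) (_ : Ω) => (1:ℝ)) i ω)
        = Y 0 ω from congrFun hsum2 ω]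
    rw [heqY] at haccY
    obtain ⟨hXYmem, hXYle⟩ := haccY
    have hub := htrans' (t+1) ht1 X (Y 0) hX (hYmem 0) (hYsm 0)
    have hRleY : ρ (t+1) X ≤ᵐ[μ] Y 0 := by
      filter_upwards [hub, hXYle] with ω h1 h2
      have h1' : ρ (t+1) X ω ≤ ρ (t+1) (fun ω => X ω - Y 0 ω) ω + Y 0 ω := h1
      have h2' : ρ (t+1) (fun ω => X ω - Y 0 ω) ω ≤ 0 := h2
      linarith
    have := hmono t htT _ _ hRmem (hYmem 0) hRleY
    rw [hsum2]
    exact this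
  filter_upwards [hle1, hle2] with ω h1 h2
  exact le_antisymm h1 h2
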